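/- Let A be the lazy renewal matrix and let B be the 2×2 integer matrix with rows (1,1) and (1,2). For all positive integers m and n, the number of admissible words of length m whose last letter is at most n equals the sum of the two entries of the vector B^(m−1)·(1, n−1)ᵗ. -/

import Mathlib

/-- A finite word is admissible for `A` if consecutive letters are linked by `A`. -/
def Adm (A : ℕ+ → ℕ+ → Bool) (w : List ℕ+) : Prop :=
  List.Chain' (fun a b => A a b = true) w

/-- `L(m,n)`: admissible words of length `m` whose last letter is at most `n`. -/
def LWords (A : ℕ+ → ℕ+ → Bool) (m : ℕ) (n : ℕ+) : Set (List ℕ+) :=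
  {w : List ℕ+ | w.length = m ∧ Adm A w ∧ ∀ x ∈ w.getLast?, x ≤ n}

/-- The lazy renewal matrix: `A(i,j) = 1` iff `i = 1` or `j ∈ {i−1, i}`. -/
def lazyRenewal (i j : ℕ+) : Bool :=
  decide (i = 1 ∨ (j : ℕ) + 1 = (i : ℕ) ∨ j = i)

/-! ### Auxiliary development -/


/-- Predecessors of `j` for the lazy renewal matrix: `{i | A i j = 1}`. -/
def preds (j : ℕ+) : Finset ℕ+ := {1, j, j+1}

lemma mem_preds {i j : ℕ+} : i ∈ preds j ↔ lazyRenewal i j = true := by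
  rw [lazyRenewal, decide_eq_true_iff]
  simp only [preds, Finset.mem_insert, Finset.mem_singleton, ← PNat.coe_inj]
  push_cast
  omega

/-- `F m j`: reversed admissible words of length `m` beginning with `j`. -/
def F : ℕ → ℕ+ → Finset (List ℕ+)
  | 0, _ => ∅
  | 1, j => {[j]}
  | m+2, j => (preds j).biUnion fun i => (F (m+1) i).image (j :: ·)

lemma mem_F : ∀ (m : ℕ) (j : ℕ+) (w : List ℕ+), w ∈ F (m+1) j ↔
    w.length = m+1 ∧ w.head? = some j ∧
      List.Chain' (fun a b => lazyRenewal b a = true) w := by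
  intro m
  induction m with
  | zero =>
    intro j w
    simp only [F, Finset.mem_singleton]
    constructor
    · rintro rfl; simp; exact List.isChain_singleton _
    · rintro ⟨h1, h2, -⟩
      match w, h1 with
      | [x], _ => simp_all
  | succ m ih =>
    intro j w
    simp only [F, Finset.mem_biUnion, Finset.mem_image]
    constructor
    · rintro ⟨i, hi, v, hv, rfl⟩
      obtain ⟨hl, hh, hc⟩ := (ih i v).mp hv
      refine ⟨by simp [hl], rfl, ?_⟩
      unfold List.Chain'; rw [List.isChain_cons]
      exact ⟨fun b hb => by rw [hh] at hb; cases hb; exact mem_preds.mp hi, hc⟩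
    · rintro ⟨hl, hh, hc⟩
      match w with
      | a :: v =>
        obtain rfl : a = j := by simpa using hh
        have hvne : v ≠ [] := by
          intro h; subst h; simp at hl
        obtain ⟨i, hi⟩ : ∃ i, v.head? = some i := by
          cases v with
          | nil => exact absurd rfl hvne
          | cons x t => exact ⟨x, rfl⟩
        unfold List.Chain' at hc; rw [List.isChain_cons] at hc
        refine ⟨i, mem_preds.mpr (hc.1 i hi), v,
          (ih i v).mpr ⟨by simpa using hl, hi, hc.2⟩, rfl⟩

/-- The pair `(α_k, β_k)` counting words ending at `1` resp. at any fixed `j ≥ 2`. -/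
def ab : ℕ → ℕ × ℕ
  | 0 => (1, 1)
  | k+1 => ((ab k).1 + (ab k).2, (ab k).1 + 2*(ab k).2)

lemma card_F_rec (m : ℕ) (j : ℕ+) :
    (F (m+2) j).card = ∑ i ∈ preds j, (F (m+1) i).card := by
  rw [show F (m+2) j = (preds j).biUnion fun i => (F (m+1) i).image (j :: ·) from rfl]
  rw [Finset.card_biUnion]
  · refine Finset.sum_congr rfl fun i _ => ?_
    exact Finset.card_image_of_injective _ (fun a b h => by simpa using h)
  · intro i _ i' _ hne
    rw [Function.onFun, Finset.disjoint_left]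
    intro w hw hw'
    simp only [Finset.mem_image] at hw hw'
    obtain ⟨v, hv, rfl⟩ := hw
    obtain ⟨v', hv', he⟩ := hw'
    have hvv : v' = v := by simpa using he
    rw [hvv] at hv'
    exact hne (Option.some_injective _
      (((mem_F m i v).mp hv).2.1.symm.trans ((mem_F m i' v).mp hv').2.1))

lemma pnat_one_ne_add (j : ℕ+) : (1 : ℕ+) ≠ j + 1 := by
  intro h
  have := congrArg PNat.val h
  rw [PNat.add_coe, PNat.one_coe] at this
  have := j.pos
  omega

lemma pnat_ne_add (j : ℕ+) : j ≠ j + 1 := by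
  intro h
  have := congrArg PNat.val h
  rw [PNat.add_coe, PNat.one_coe] at this
  omega

lemma card_F : ∀ m : ℕ, (F (m+1) 1).card = (ab m).1 ∧
    ∀ j : ℕ+, 2 ≤ j → (F (m+1) j).card = (ab m).2 := by
  intro m
  induction m with
  | zero => exact ⟨rfl, fun j _ => rfl⟩
  | succ m ih =>
    obtain ⟨ih1, ih2⟩ := ih
    constructor
    · rw [card_F_rec]
      have : preds 1 = {1, 2} := by decide
      rw [this, Finset.sum_insert (by decide), Finset.sum_singleton, ih1, ih2 2 le_rfl]
      rfl
    · intro j hj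
      rw [card_F_rec]
      have h1j : (1 : ℕ+) ≠ j := by
        intro h; rw [← h] at hj; exact absurd hj (by decide)
      rw [show preds j = {1, j, j+1} from rfl]
      rw [Finset.sum_insert (by
          simp only [Finset.mem_insert, Finset.mem_singleton]; push_neg
          exact ⟨h1j, pnat_one_ne_add j⟩),
        Finset.sum_insert (by simpa using pnat_ne_add j),
        Finset.sum_singleton, ih1, ih2 j hj,
        ih2 (j+1) (le_trans hj (by rw [← PNat.coe_le_coe, PNat.add_coe]; omega))]
      show _ = (ab m).1 + 2*(ab m).2
      ring

lemma icc_split (n : ℕ+) : Finset.Icc 1 n = insert 1 (Finset.Icc 2 n) := by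
  ext x
  simp only [Finset.mem_Icc, Finset.mem_insert, ← PNat.coe_le_coe, ← PNat.coe_inj]
  have := x.pos
  have := n.pos
  push_cast
  omega

lemma card_icc2 (n : ℕ+) : (Finset.Icc (2:ℕ+) n).card = (n:ℕ) - 1 := by
  rw [PNat.card_Icc]
  simp

lemma card_G (k : ℕ) (n : ℕ+) :
    ((Finset.Icc 1 n).biUnion (F (k+1))).card = (ab k).1 + ((n:ℕ) - 1) * (ab k).2 := by
  rw [Finset.card_biUnion]
  · rw [icc_split, Finset.sum_insert (by simp [Finset.mem_Icc]),
      (card_F k).1]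
    congr 1
    rw [Finset.sum_congr rfl (fun j hj => (card_F k).2 j (Finset.mem_Icc.mp hj).1),
      Finset.sum_const, card_icc2, smul_eq_mul]
  · intro i _ i' _ hne
    rw [Function.onFun, Finset.disjoint_left]
    intro w hw hw'
    exact hne (Option.some_injective _
      (((mem_F k i w).mp hw).2.1.symm.trans ((mem_F k i' w).mp hw').2.1))

lemma vecMul_pow (k : ℕ) :
    Matrix.vecMul ![1, 1] ((!![1, 1; 1, 2] : Matrix (Fin 2) (Fin 2) ℕ) ^ k) =
      ![(ab k).1, (ab k).2] := by
  induction k with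
  | zero =>
    funext i
    fin_cases i <;> simp [Matrix.vecMul, ab, dotProduct, Fin.sum_univ_two]
  | succ k ih =>
    rw [pow_succ, ← Matrix.vecMul_vecMul, ih]
    funext i
    fin_cases i <;>
      (simp [Matrix.vecMul, dotProduct, Fin.sum_univ_two, ab]; try ring)

lemma mulVec_sum (M : Matrix (Fin 2) (Fin 2) ℕ) (v : Fin 2 → ℕ) :
    M.mulVec v 0 + M.mulVec v 1 = dotProduct (Matrix.vecMul ![1,1] M) v := by
  simp [Matrix.mulVec, Matrix.vecMul, dotProduct, Fin.sum_univ_two]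
  ring

lemma matrix_side (k : ℕ) (c : ℕ) :
    ((!![1, 1; 1, 2] : Matrix (Fin 2) (Fin 2) ℕ) ^ k).mulVec ![1, c] 0 +
      ((!![1, 1; 1, 2] : Matrix (Fin 2) (Fin 2) ℕ) ^ k).mulVec ![1, c] 1 =
      (ab k).1 + c * (ab k).2 := by
  rw [mulVec_sum, vecMul_pow]
  simp [dotProduct, Fin.sum_univ_two]
  ring

lemma lwords_eq (k : ℕ) (n : ℕ+) :
    LWords lazyRenewal (k+1) n =
      List.reverse '' ↑((Finset.Icc 1 n).biUnion (F (k+1))) := by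
  ext w
  constructor
  · rintro ⟨hl, hc, hlast⟩
    have hwne : w ≠ [] := by intro h; subst h; simp at hl
    obtain ⟨x, hx⟩ : ∃ x, w.getLast? = some x := by
      cases w with
      | nil => exact absurd rfl hwne
      | cons a t => exact ⟨(a :: t).getLast (by simp), List.getLast?_eq_getLast _⟩
    refine ⟨w.reverse, ?_, by simp⟩
    simp only [Finset.coe_biUnion, Finset.coe_Icc, Set.mem_iUnion]
    refine ⟨x, ⟨x.one_le, hlast x hx⟩, ?_⟩
    rw [Finset.mem_coe, mem_F]
    refine ⟨by simpa using hl, by rw [List.head?_reverse]; exact hx, ?_⟩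
    unfold List.Chain'; rw [List.isChain_reverse]
    exact hc
  · rintro ⟨v, hv, rfl⟩
    simp only [Finset.coe_biUnion, Finset.coe_Icc, Set.mem_iUnion] at hv
    obtain ⟨j, ⟨-, hjn⟩, hv⟩ := hv
    rw [Finset.mem_coe, mem_F] at hv
    obtain ⟨hl, hh, hc⟩ := hv
    refine ⟨by simpa using hl, ?_, ?_⟩
    · show List.Chain' _ v.reverse
      unfold List.Chain'; rw [List.isChain_reverse]
      exact hc
    · intro x hx
      rw [List.getLast?_reverse, hh] at hx
      cases hx
      exact hjn


/-- for the lazy renewal matrix and the 2×2 matrix `B` with rows `(1,1)`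
and `(1,2)`, for all `m ≥ 1` and `n`, the number of admissible words of length `m`
whose last letter is at most `n` equals the sum of the two entries of the vector
`B^(m−1)·(1, n−1)ᵗ`. -/
theorem stmt14 (m : ℕ) (hm : 1 ≤ m) (n : ℕ+) :
    (LWords lazyRenewal m n).ncard =
      ((!![1, 1; 1, 2] : Matrix (Fin 2) (Fin 2) ℕ) ^ (m - 1)).mulVec
        ![1, (n : ℕ) - 1] 0 +
      ((!![1, 1; 1, 2] : Matrix (Fin 2) (Fin 2) ℕ) ^ (m - 1)).mulVec
        ![1, (n : ℕ) - 1] 1 := by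
  obtain ⟨k, rfl⟩ : ∃ k, m = k + 1 := ⟨m - 1, by omega⟩
  rw [matrix_side, lwords_eq, Set.ncard_image_of_injective _ List.reverse_injective,
    Set.ncard_coe_finset]
  simp only [Nat.add_sub_cancel]
  exact card_G k n
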